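/- arXiv:1908.09915 — 3 statements merged into one kernel-verified Lean document; each statement's English description precedes it below -/
import Mathlib

section
/- Under Assumption 1, the map F satisfies (λ − ε)‖y‖₂ ≤ ‖F(x) y‖₂ ≤ (Λ + ε)‖y‖₂ for all x, y ∈ ℝⁿ. -/
open scoped RealInnerProductSpace

/-- Cocoercivity-type lower bound from convexity + smoothness. -/
lemma coco_aux {n : ℕ} (f : EuclideanSpace ℝ (Fin n) → ℝ)
    (g : EuclideanSpace ℝ (Fin n) → EuclideanSpace ℝ (Fin n)) (Lam : ℝ) (hLam : 0 < Lam)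
    (hconv : ∀ x y : EuclideanSpace ℝ (Fin n), 0 ≤ f y - f x - ⟪g x, y - x⟫)
    (hsm : ∀ x y : EuclideanSpace ℝ (Fin n), f y - f x - ⟪g x, y - x⟫ ≤ Lam / 2 * ‖y - x‖ ^ 2)
    (u v : EuclideanSpace ℝ (Fin n)) :
    (2 * Lam)⁻¹ * ‖g v - g u‖ ^ 2 ≤ f v - f u - ⟪g u, v - u⟫ := by
  set q := g v - g u with hq
  set z := v - Lam⁻¹ • q with hz
  have h1 := hconv u z
  have h2 := hsm v z
  have hzv : z - v = -(Lam⁻¹ • q) := by rw [hz]; abel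
  have hzu : z - u = (v - u) - Lam⁻¹ • q := by rw [hz]; abel
  have e1 : ⟪g u, z - u⟫ = ⟪g u, v - u⟫ - Lam⁻¹ * ⟪g u, q⟫ := by
    rw [hzu, inner_sub_right, real_inner_smul_right]
  have e2 : ⟪g v, z - v⟫ = -(Lam⁻¹ * ⟪g v, q⟫) := by
    rw [hzv, inner_neg_right, real_inner_smul_right]
  have e3 : ‖z - v‖ ^ 2 = Lam⁻¹ ^ 2 * ‖q‖ ^ 2 := by
    rw [hzv, norm_neg, norm_smul, mul_pow, Real.norm_eq_abs, sq_abs]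
  have e4 : ⟪g v, q⟫ - ⟪g u, q⟫ = ‖q‖ ^ 2 := by
    rw [← inner_sub_left, ← hq, real_inner_self_eq_norm_sq]
  rw [e1] at h1
  rw [e2, e3] at h2
  have hL : Lam⁻¹ * Lam = 1 := inv_mul_cancel₀ (ne_of_gt hLam)
  have k1 : Lam / 2 * Lam⁻¹ ^ 2 = (2 * Lam)⁻¹ := by
    field_simp
  have e5 : Lam⁻¹ * (⟪g v, q⟫ - ⟪g u, q⟫) = Lam⁻¹ * ‖q‖ ^ 2 := by rw [e4]
  have k2 : Lam⁻¹ * ‖q‖ ^ 2 - (2 * Lam)⁻¹ * ‖q‖ ^ 2 = (2 * Lam)⁻¹ * ‖q‖ ^ 2 := by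
    field_simp; ring
  nlinarith [e5, k1, k2, sq_nonneg ‖q‖]

/-- Multiplication of a real matrix with a Euclidean vector. -/
noncomputable def mulVecE {n m : ℕ} (A : Matrix (Fin n) (Fin m) ℝ)
    (v : EuclideanSpace ℝ (Fin m)) : EuclideanSpace ℝ (Fin n) :=
  Matrix.toEuclideanLin A v

/-- Under Assumption 1 (strong convexity/smoothness of `f` and approximate
local linearity of `∇f` via `F` with error `ε`), the map `F` satisfies
`(lam − ε)‖y‖ ≤ ‖F(x) y‖ ≤ (Lam + ε)‖y‖` for all `x, y`. -/
theorem stmt1 {n : ℕ} (f : EuclideanSpace ℝ (Fin n) → ℝ)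
    (g : EuclideanSpace ℝ (Fin n) → EuclideanSpace ℝ (Fin n))
    (lam Lam : ℝ) (hlam : 0 < lam) (hlamLam : lam ≤ Lam)
    (hgrad : ∀ x, HasGradientAt f (g x) x)
    (hsc : ∀ x y : EuclideanSpace ℝ (Fin n), lam / 2 * ‖y - x‖ ^ 2 ≤ f y - f x - ⟪g x, y - x⟫)
    (hsm : ∀ x y : EuclideanSpace ℝ (Fin n), f y - f x - ⟪g x, y - x⟫ ≤ Lam / 2 * ‖y - x‖ ^ 2)
    (F : EuclideanSpace ℝ (Fin n) → Matrix (Fin n) (Fin n) ℝ) (ε : ℝ) (hε : 0 ≤ ε)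
    (hF : ∀ x y : EuclideanSpace ℝ (Fin n),
      ‖(2 : ℝ)⁻¹ • (g (x + y) - g (x - y)) - mulVecE (F x) y‖ ≤ ε * ‖y‖) :
    ∀ x y : EuclideanSpace ℝ (Fin n),
      (lam - ε) * ‖y‖ ≤ ‖mulVecE (F x) y‖ ∧ ‖mulVecE (F x) y‖ ≤ (Lam + ε) * ‖y‖ := by
  have hLam : 0 < Lam := lt_of_lt_of_le hlam hlamLam
  have hconv : ∀ x y : EuclideanSpace ℝ (Fin n), 0 ≤ f y - f x - ⟪g x, y - x⟫ := by
    intro x y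
    refine le_trans ?_ (hsc x y)
    positivity
  intro x y
  set u := x + y with hu
  set v := x - y with hv
  set q := g u - g v with hqdef
  set d := (2 : ℝ)⁻¹ • q with hddef
  set Fy := mulVecE (F x) y with hFy
  have huv : u - v = (2 : ℝ) • y := by
    rw [hu, hv]; rw [two_smul]; abel
  have hnuv : ‖u - v‖ = 2 * ‖y‖ := by
    rw [huv, norm_smul]; simp
  have hdn : ‖d‖ = 2⁻¹ * ‖q‖ := by
    rw [hddef, norm_smul]; simp
  -- strong monotonicity
  have c1 := hsc u v
  have c2 := hsc v u
  have hvume : ‖v - u‖ = ‖u - v‖ := norm_sub_rev _ _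
  have eD : ⟪q, u - v⟫ = -⟪g u, v - u⟫ - ⟪g v, u - v⟫ := by
    have h1 : ⟪g u, v - u⟫ = -⟪g u, u - v⟫ := by
      rw [show v - u = -(u - v) by abel, inner_neg_right]
    rw [hqdef, inner_sub_left, h1]; ring
  have hmono : lam * ‖u - v‖ ^ 2 ≤ ⟪q, u - v⟫ := by
    rw [eD]; rw [hvume] at c1; linarith
  -- Lipschitz bound on q
  have d1 := coco_aux f g Lam hLam hconv hsm u v
  have d2 := coco_aux f g Lam hLam hconv hsm v u
  have hqq : ‖g v - g u‖ = ‖q‖ := by rw [hqdef, norm_sub_rev]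
  rw [hqq] at d1
  rw [← hqdef] at d2
  have hcoco : Lam⁻¹ * ‖q‖ ^ 2 ≤ ⟪q, u - v⟫ := by
    have k : (2 * Lam)⁻¹ * ‖q‖ ^ 2 + (2 * Lam)⁻¹ * ‖q‖ ^ 2 = Lam⁻¹ * ‖q‖ ^ 2 := by
      field_simp; ring
    rw [eD]; linarith
  have hcs : ⟪q, u - v⟫ ≤ ‖q‖ * ‖u - v‖ := real_inner_le_norm q (u - v)
  have hlip : ‖q‖ ≤ Lam * ‖u - v‖ := by
    rcases eq_or_lt_of_le (norm_nonneg q) with h0 | h0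
    · rw [← h0]; positivity
    · have h2 : ‖q‖ * ‖q‖ ≤ Lam * (‖q‖ * ‖u - v‖) := by
        have := mul_le_mul_of_nonneg_left (le_trans hcoco hcs) (le_of_lt hLam)
        calc ‖q‖ * ‖q‖ = Lam * (Lam⁻¹ * ‖q‖ ^ 2) := by
                field_simp
          _ ≤ Lam * (‖q‖ * ‖u - v‖) := this
      nlinarith
  -- error bound
  have hFb := hF x y
  rw [← hu, ← hv, ← hqdef, ← hddef, ← hFy] at hFb
  have hub : ‖Fy‖ ≤ ‖d‖ + ε * ‖y‖ := by
    have h1 : ‖Fy‖ - ‖d‖ ≤ ‖Fy - d‖ := norm_sub_norm_le _ _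
    rw [norm_sub_rev] at h1
    linarith
  have hlb : ‖d‖ ≤ ‖Fy‖ + ε * ‖y‖ := by
    have h1 : ‖d‖ - ‖Fy‖ ≤ ‖d - Fy‖ := norm_sub_norm_le _ _
    linarith
  constructor
  · -- lower bound
    have hdy : ⟪q, u - v⟫ = 4 * ⟪d, y⟫ := by
      rw [huv, real_inner_smul_right, hddef, real_inner_smul_left]; ring
    have hdcs : ⟪d, y⟫ ≤ ‖d‖ * ‖y‖ := real_inner_le_norm d y
    have key : lam * ‖y‖ ^ 2 ≤ ‖d‖ * ‖y‖ := by
      rw [hdy, hnuv] at hmono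
      have e : lam * (2 * ‖y‖) ^ 2 = 4 * (lam * ‖y‖ ^ 2) := by ring
      rw [e] at hmono
      linarith
    rcases eq_or_lt_of_le (norm_nonneg y) with h0 | h0
    · rw [← h0]
      simpa using norm_nonneg Fy
    · have h2 : lam * ‖y‖ ≤ ‖d‖ := by
        have k' : (lam * ‖y‖) * ‖y‖ ≤ ‖d‖ * ‖y‖ := by
          calc (lam * ‖y‖) * ‖y‖ = lam * ‖y‖ ^ 2 := by ring
            _ ≤ ‖d‖ * ‖y‖ := key
        exact le_of_mul_le_mul_right k' h0
      have : (lam - ε) * ‖y‖ = lam * ‖y‖ - ε * ‖y‖ := by ring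
      rw [this]
      linarith
  · -- upper bound
    have : ‖d‖ ≤ Lam * ‖y‖ := by
      rw [hdn]; rw [hnuv] at hlip; linarith
    linarith
end

section
/- Let f : ℝⁿ → ℝ be differentiable and Λ-smooth with ∇f(0) = 0, let A ∈ ℝ^{n×n} with Λ‖A‖ < 1 (spectral norm), B ∈ ℝ^{n×p}, and let (u_t)_{t≥0} be any sequence in ℝᵖ. Define x₀ = 0 and x_t = ∇f(A x_{t−1} + B u_{t−1}) for t ≥ 1. Then for every T ≥ 2, max_{1≤s≤T−1} ‖x_s‖₂ ≤ (Λ/(1 − Λ‖A‖)) · max_{1≤s≤T−1} ‖B u_{s−1}‖₂. -/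
open scoped RealInnerProductSpace

/-- Spectral (ℓ²-operator) norm of a real matrix. -/
noncomputable def specNorm {n m : ℕ} (A : Matrix (Fin n) (Fin m) ℝ) : ℝ :=
  ‖LinearMap.toContinuousLinearMap (Matrix.toEuclideanLin A)‖

/-- For a `Lam`-smooth `f` with `∇f(0) = 0` and `Lam ‖A‖ < 1`, the trajectory
`x₀ = 0`, `x_t = ∇f(A x_{t−1} + B u_{t−1})` satisfies
`max_{1≤s≤T−1} ‖x_s‖ ≤ (Lam/(1 − Lam‖A‖)) max_{1≤s≤T−1} ‖B u_{s−1}‖`. -/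
theorem stmt11 {n p : ℕ} (f : EuclideanSpace ℝ (Fin n) → ℝ)
    (g : EuclideanSpace ℝ (Fin n) → EuclideanSpace ℝ (Fin n))
    (Lam : ℝ) (hLam : 0 ≤ Lam)
    (hgrad : ∀ x, HasGradientAt f (g x) x)
    (hsmooth : ∀ x y : EuclideanSpace ℝ (Fin n), ‖g y - g x‖ ≤ Lam * ‖y - x‖)
    (hg0 : g 0 = 0)
    (A : Matrix (Fin n) (Fin n) ℝ) (B : Matrix (Fin n) (Fin p) ℝ)
    (hA : Lam * specNorm A < 1)
    (u : ℕ → EuclideanSpace ℝ (Fin p))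
    (x : ℕ → EuclideanSpace ℝ (Fin n)) (hx0 : x 0 = 0)
    (hx : ∀ t, x (t + 1) = g (mulVecE A (x t) + mulVecE B (u t)))
    (T : ℕ) (hT : 2 ≤ T) :
    ∀ s ∈ Finset.Icc 1 (T - 1),
      ‖x s‖ ≤ Lam / (1 - Lam * specNorm A) *
        (Finset.Icc 1 (T - 1)).sup' (Finset.nonempty_Icc.mpr (by omega))
          (fun s' => ‖mulVecE B (u (s' - 1))‖) := by
  have hcnn : 0 ≤ Lam * specNorm A := mul_nonneg hLam (norm_nonneg _)
  have h1c : 0 < 1 - Lam * specNorm A := by linarith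
  set M := (Finset.Icc 1 (T - 1)).sup' (Finset.nonempty_Icc.mpr (by omega))
      (fun s' => ‖mulVecE B (u (s' - 1))‖) with hM
  have hMnn : 0 ≤ M := le_trans (norm_nonneg _)
    (Finset.le_sup' (f := fun s' => ‖mulVecE B (u (s' - 1))‖)
      (by simp; omega : 1 ∈ Finset.Icc 1 (T - 1)))
  have hAop : ∀ v, ‖mulVecE A v‖ ≤ specNorm A * ‖v‖ := fun v =>
    (LinearMap.toContinuousLinearMap (Matrix.toEuclideanLin A)).le_opNorm v
  have hgb : ∀ y, ‖g y‖ ≤ Lam * ‖y‖ := by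
    intro y
    have := hsmooth 0 y
    simpa [hg0] using this
  have key : ∀ s, s ≤ T - 1 → ‖x s‖ ≤ Lam / (1 - Lam * specNorm A) * M := by
    intro s
    induction s with
    | zero => intro _; rw [hx0]; simp; positivity
    | succ t ih =>
      intro hst
      have hxb := ih (by omega)
      have hmem : t + 1 ∈ Finset.Icc 1 (T - 1) := by simp; omega
      have hBu : ‖mulVecE B (u t)‖ ≤ M := by
        have h := Finset.le_sup' (f := fun s' => ‖mulVecE B (u (s' - 1))‖) hmem
        simp only [Nat.add_sub_cancel] at h
        exact h
      rw [hx t]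
      calc ‖g (mulVecE A (x t) + mulVecE B (u t))‖
          ≤ Lam * ‖mulVecE A (x t) + mulVecE B (u t)‖ := hgb _
        _ ≤ Lam * (specNorm A * ‖x t‖ + ‖mulVecE B (u t)‖) := by
            have h1 := norm_add_le (mulVecE A (x t)) (mulVecE B (u t))
            have h2 := hAop (x t)
            apply mul_le_mul_of_nonneg_left _ hLam
            linarith
        _ ≤ Lam * (specNorm A * (Lam / (1 - Lam * specNorm A) * M) + M) := by
            apply mul_le_mul_of_nonneg_left _ hLam
            have hs0 : 0 ≤ specNorm A := norm_nonneg _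
            nlinarith [mul_le_mul_of_nonneg_left hxb hs0]
        _ ≤ Lam / (1 - Lam * specNorm A) * M := by
            have hne : (1 - Lam * specNorm A) ≠ 0 := ne_of_gt h1c
            have heq : Lam * (specNorm A * (Lam / (1 - Lam * specNorm A) * M) + M)
                = Lam / (1 - Lam * specNorm A) * M := by
              field_simp
              ring_nf
            exact le_of_eq heq
  intro s hs
  simp only [Finset.mem_Icc] at hs
  exact key s hs.2
end

section
/- Fix 0 < λ ≤ Λ and define f : ℝⁿ → ℝ by f(x) = (1/2) Σ_{i=1}^{n} max{ λ ((−x_i)₊)², Λ ((x_i)₊)² }, whose gradient has coordinates (∇f(x))_i = ((Λ+λ)/2) x_i + ((Λ−λ)/2)|x_i|, and define the diagonal matrix F(x) with diagonal entries F(x)_{ii} = (Λ+λ)/2 + ((Λ−λ)/2) sgn(x_i). Then for all x, y ∈ ℝⁿ, ‖ (∇f(x+y) − ∇f(x−y))/2 − F(x) y ‖₂ ≤ ((Λ−λ)/2) ‖y‖₂. -/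
open scoped RealInnerProductSpace


/-- The piecewise quadratic function `f(x) = (1/2) Σᵢ max{lam ((−xᵢ)₊)², Lam ((xᵢ)₊)²}`. -/
noncomputable def reluF (lam Lam : ℝ) {n : ℕ} (x : EuclideanSpace ℝ (Fin n)) : ℝ :=
  (1 / 2) * ∑ i, max (lam * max (-(x i)) 0 ^ 2) (Lam * max (x i) 0 ^ 2)

/-- The gradient of `reluF`, with coordinates `((Lam+lam)/2) xᵢ + ((Lam−lam)/2)|xᵢ|`. -/
noncomputable def reluGrad (lam Lam : ℝ) {n : ℕ} (x : EuclideanSpace ℝ (Fin n)) :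
    EuclideanSpace ℝ (Fin n) :=
  WithLp.toLp 2 (fun i => (Lam + lam) / 2 * x i + (Lam - lam) / 2 * |x i| : Fin n → ℝ)

/-- The diagonal matrix `F(x)` with entries `(Lam+lam)/2 + ((Lam−lam)/2) sgn(xᵢ)`. -/
noncomputable def reluFmat (lam Lam : ℝ) {n : ℕ} (x : EuclideanSpace ℝ (Fin n)) :
    Matrix (Fin n) (Fin n) ℝ :=
  Matrix.diagonal fun i => (Lam + lam) / 2 + (Lam - lam) / 2 * Real.sign (x i)

lemma key13 (a b : ℝ) : |(|a + b| - |a - b|) / 2 - Real.sign a * b| ≤ |b| := by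
  have hs : Real.sign a = -1 ∨ Real.sign a = 0 ∨ Real.sign a = 1 := by
    rcases lt_trichotomy a 0 with h|h|h
    · exact Or.inl (Real.sign_of_neg h)
    · exact Or.inr (Or.inl (by simp [h, Real.sign_zero]))
    · exact Or.inr (Or.inr (Real.sign_of_pos h))
  have ha : (Real.sign a = -1 → a < 0) ∧ (Real.sign a = 0 → a = 0) ∧ (Real.sign a = 1 → 0 < a) := by
    refine ⟨fun h => ?_, fun h => ?_, fun h => ?_⟩
    · by_contra hc; push_neg at hc
      rcases eq_or_lt_of_le hc with h'|h'
      · simp [← h', Real.sign_zero] at h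
      · rw [Real.sign_of_pos h'] at h; norm_num at h
    · by_contra hc
      rcases lt_trichotomy a 0 with h'|h'|h'
      · rw [Real.sign_of_neg h'] at h; norm_num at h
      · exact hc h'
      · rw [Real.sign_of_pos h'] at h; norm_num at h
    · by_contra hc; push_neg at hc
      rcases eq_or_lt_of_le hc with h'|h'
      · simp [h', Real.sign_zero] at h
      · rw [Real.sign_of_neg h'] at h; norm_num at h
  rcases hs with h|h|h <;>
    [have := ha.1 h; have := ha.2.1 h; have := ha.2.2 h] <;>
    rw [h] <;>
    rcases abs_cases (a + b) with ⟨h1, h1'⟩|⟨h1, h1'⟩ <;>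
    rcases abs_cases (a - b) with ⟨h2, h2'⟩|⟨h2, h2'⟩ <;>
    rw [h1, h2, abs_le] <;>
    rcases abs_cases b with ⟨h3, h3'⟩|⟨h3, h3'⟩ <;>
    constructor <;> linarith

lemma norm_le13 {n : ℕ} (v w : EuclideanSpace ℝ (Fin n)) (h : ∀ i, |v i| ≤ |w i|) :
    ‖v‖ ≤ ‖w‖ := by
  rw [EuclideanSpace.norm_eq, EuclideanSpace.norm_eq]
  apply Real.sqrt_le_sqrt
  apply Finset.sum_le_sum
  intro i _
  simp only [Real.norm_eq_abs]
  exact pow_le_pow_left₀ (abs_nonneg _) (h i) 2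

/-- For the (leaky) ReLU-type function above,
`‖(∇f(x+y) − ∇f(x−y))/2 − F(x) y‖ ≤ ((Lam−lam)/2) ‖y‖` for all `x, y`. -/
theorem stmt13 {n : ℕ} (lam Lam : ℝ) (hlam : 0 < lam) (hlamLam : lam ≤ Lam) :
    ∀ x y : EuclideanSpace ℝ (Fin n),
      ‖(2 : ℝ)⁻¹ • (reluGrad lam Lam (x + y) - reluGrad lam Lam (x - y)) -
          mulVecE (reluFmat lam Lam x) y‖ ≤ (Lam - lam) / 2 * ‖y‖ := by
  intro x y
  have hc : 0 ≤ (Lam - lam) / 2 := by linarith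
  have hbound : ‖(2 : ℝ)⁻¹ • (reluGrad lam Lam (x + y) - reluGrad lam Lam (x - y)) -
      mulVecE (reluFmat lam Lam x) y‖ ≤ ‖((Lam - lam) / 2) • y‖ := by
    apply norm_le13
    intro i
    have hmv : mulVecE (reluFmat lam Lam x) y i =
        ((Lam + lam) / 2 + (Lam - lam) / 2 * Real.sign (x i)) * y i := by
      simp [mulVecE, reluFmat, Matrix.toEuclideanLin, Matrix.toLin'_apply,
        Matrix.mulVec_diagonal]
    have hgi : ((2 : ℝ)⁻¹ • (reluGrad lam Lam (x + y) - reluGrad lam Lam (x - y)) -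
        mulVecE (reluFmat lam Lam x) y) i =
        (Lam - lam) / 2 * ((|x i + y i| - |x i - y i|) / 2 - Real.sign (x i) * y i) := by
      simp only [PiLp.sub_apply, PiLp.smul_apply, smul_eq_mul, hmv, reluGrad,
        PiLp.add_apply, PiLp.toLp_apply]
      ring
    rw [hgi, PiLp.smul_apply, smul_eq_mul, abs_mul, abs_mul, abs_of_nonneg hc]
    exact mul_le_mul_of_nonneg_left (key13 (x i) (y i)) hc
  calc _ ≤ ‖((Lam - lam) / 2) • y‖ := hbound
    _ = (Lam - lam) / 2 * ‖y‖ := by rw [norm_smul, Real.norm_eq_abs, abs_of_nonneg hc]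
end
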